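/- Let k ≥ 2 be an integer and q = 2. For every Sperner labeling c of Δ_{k,2} ∩ ℤ^k, the number of cells of the regular triangulation 𝒯 of Δ_{k,2} that are non-monochromatic for c is at least 2^{k−1} − 1. In particular, m_{k,2} ≥ 2^{k−1} − 1. -/

import Mathlib

open Finset

/-- Membership in the discrete simplex `Δ_{k,q} ∩ ℤ^k`:
integer vectors with nonnegative entries summing to `q`. -/
def inSimplex (k q : ℕ) (v : Fin k → ℤ) : Prop :=
  (∀ i, 0 ≤ v i) ∧ (∑ i, v i) = (q : ℤ)

/-- The nonzero entries of `d`, read from left to right, alternate in sign. -/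
def AltSign {k : ℕ} (d : Fin k → ℤ) : Prop :=
  ∀ i j : Fin k, i < j → d i ≠ 0 → d j ≠ 0 →
    (∀ l : Fin k, i < l → l < j → d l = 0) → d i = - d j

/-- Adjacency in the graph `G_k` on `Δ_{k,q} ∩ ℤ^k`. -/
def AdjG (k q : ℕ) (v w : Fin k → ℤ) : Prop :=
  v ≠ w ∧ inSimplex k q v ∧ inSimplex k q w ∧
    (∀ i, v i - w i = -1 ∨ v i - w i = 0 ∨ v i - w i = 1) ∧
    (Finset.univ.filter (fun i => v i - w i = 1)).card =
      (Finset.univ.filter (fun i => v i - w i = -1)).card ∧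
    AltSign (fun i => v i - w i)

/-- A cell of the regular triangulation `𝒯` of `Δ_{k,q}`: a `k`-element subset of
`Δ_{k,q} ∩ ℤ^k` whose elements are pairwise adjacent in `G_k`. -/
def IsCell (k q : ℕ) (S : Finset (Fin k → ℤ)) : Prop :=
  S.card = k ∧ (∀ v ∈ S, inSimplex k q v) ∧
    (∀ v ∈ S, ∀ w ∈ S, v ≠ w → AdjG k q v w)

/-- A Sperner labeling of `Δ_{k,q} ∩ ℤ^k`. -/
def IsSperner (k q : ℕ) (c : (Fin k → ℤ) → Fin k) : Prop :=
  ∀ v : Fin k → ℤ, inSimplex k q v → ∀ i : Fin k, v i = 0 → c v ≠ i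

/-- A cell is non-monochromatic for `c` if `c` takes at least two values on it. -/
def NonMono {k : ℕ} (c : (Fin k → ℤ) → Fin k) (S : Finset (Fin k → ℤ)) : Prop :=
  ∃ u ∈ S, ∃ v ∈ S, c u ≠ c v

/-- Membership in `W_{k,q} = R_{k,q} ∩ ℤ^{k-1}`. -/
def inW (k q : ℕ) (w : Fin (k-1) → ℤ) : Prop :=
  (∀ i, 0 ≤ w i) ∧ (∀ i, w i ≤ (q : ℤ)) ∧
    ∀ i j : Fin (k-1), i ≤ j → w i ≤ w j

/-- A permutation `π` of `{1,…,k-1}` (here `Fin (k-1)`) is consistent with `w`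
if `w i = w (i+1)` implies `π i < π (i+1)`. -/
def Consistent (k : ℕ) (w : Fin (k-1) → ℤ) (π : Equiv.Perm (Fin (k-1))) : Prop :=
  ∀ i j : Fin (k-1), (i : ℕ) + 1 = (j : ℕ) → w i = w j → π i < π j

/-- The simplex `σ(w,π) ⊆ ℝ^{k-1}`. -/
def simplexSet (k : ℕ) (w : Fin (k-1) → ℤ) (π : Equiv.Perm (Fin (k-1))) :
    Set (Fin (k-1) → ℝ) :=
  {y | (∀ i, 0 ≤ y i) ∧
    (∀ s, 0 ≤ y (π s) - (w (π s) : ℝ)) ∧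
    (∀ s, y (π s) - (w (π s) : ℝ) ≤ 1) ∧
    (∀ s t : Fin (k-1), s ≤ t →
      y (π s) - (w (π s) : ℝ) ≤ y (π t) - (w (π t) : ℝ))}

/-- Coercion of an integer vector to a real vector. -/
def toR {n : ℕ} (w : Fin n → ℤ) : Fin n → ℝ := fun i => (w i : ℝ)

/-- Adjacency in the graph `G'_k` on `W_{k,q}`. -/
def AdjG' (k q : ℕ) (w1 w2 : Fin (k-1) → ℤ) : Prop :=
  w1 ≠ w2 ∧ inW k q w1 ∧ inW k q w2 ∧
    ∃ w : Fin (k-1) → ℤ, ∃ π : Equiv.Perm (Fin (k-1)),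
      inW k q w ∧ Consistent k w π ∧
        toR w1 ∈ simplexSet k w π ∧ toR w2 ∈ simplexSet k w π

/-- Adjacency in the graph `G''_k` on `W_{k,q}`. -/
def AdjG'' (k q : ℕ) (w1 w2 : Fin (k-1) → ℤ) : Prop :=
  w1 ≠ w2 ∧ inW k q w1 ∧ inW k q w2 ∧
    ((∀ i, w1 i - w2 i = 0 ∨ w1 i - w2 i = 1) ∨
      (∀ i, w1 i - w2 i = -1 ∨ w1 i - w2 i = 0))

/-- Auxiliary extension of `y : Fin (k-1) → ℤ` to `ℕ`, taking value `q` beyond `k-2`. -/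
def extW (k q : ℕ) (y : Fin (k-1) → ℤ) : ℕ → ℤ := fun n =>
  if h : n < k - 1 then y ⟨n, h⟩ else (q : ℤ)

/-- The map `φ(y₁,…,y_{k-1}) = (y₁, y₂ - y₁, …, y_{k-1} - y_{k-2}, q - y_{k-1})`. -/
def phi (k q : ℕ) (y : Fin (k-1) → ℤ) : Fin k → ℤ := fun i =>
  extW k q y (i : ℕ) - (if (i : ℕ) = 0 then 0 else extW k q y ((i : ℕ) - 1))

/-- The map `ψ(x₁,…,x_k) = (x₁, x₁+x₂, …, x₁+⋯+x_{k-1})`. -/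
def psi (k : ℕ) (x : Fin k → ℤ) : Fin (k-1) → ℤ := fun j =>
  ∑ i ∈ Finset.univ.filter (fun i : Fin k => (i : ℕ) ≤ (j : ℕ)), x i

/-- Auxiliary extension of `y : Fin (k-1) → ℝ` to `ℕ`, taking value `q` beyond `k-2`. -/
def extWR (k q : ℕ) (y : Fin (k-1) → ℝ) : ℕ → ℝ := fun n =>
  if h : n < k - 1 then y ⟨n, h⟩ else (q : ℝ)

/-- The map `φ` extended to `ℝ^{k-1}` by the same formula. -/
def phiR (k q : ℕ) (y : Fin (k-1) → ℝ) : Fin k → ℝ := fun i =>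
  extWR k q y (i : ℕ) - (if (i : ℕ) = 0 then 0 else extWR k q y ((i : ℕ) - 1))


section Aux

open Finset

variable {k : ℕ}

/-- `ptN k a b` is the vector `e_a + e_b` (indices as naturals). -/
def ptN (k : ℕ) (a b : ℕ) : Fin k → ℤ := fun i =>
  (if (i : ℕ) = a then 1 else 0) + (if (i : ℕ) = b then 1 else 0)

lemma ptN_comm (a b : ℕ) : ptN k a b = ptN k b a := by
  funext i; simp [ptN, add_comm]

/-- number of `false` steps before time `t` -/
def nF (k : ℕ) (b : Fin (k-1) → Bool) (t : ℕ) : ℕ :=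
  (univ.filter fun s : Fin (k-1) => (s : ℕ) < t ∧ b s = false).card

/-- number of `true` steps before time `t` -/
def nT (k : ℕ) (b : Fin (k-1) → Bool) (t : ℕ) : ℕ :=
  (univ.filter fun s : Fin (k-1) => (s : ℕ) < t ∧ b s = true).card

/-- total number of `true` steps -/
def tot (k : ℕ) (b : Fin (k-1) → Bool) : ℕ :=
  (univ.filter fun s : Fin (k-1) => b s = true).card

def al (k : ℕ) (b : Fin (k-1) → Bool) (t : ℕ) : ℕ := nF k b t

def be (k : ℕ) (b : Fin (k-1) → Bool) (t : ℕ) : ℕ := (k - 1 - tot k b) + nT k b t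

def vert (k : ℕ) (b : Fin (k-1) → Bool) (t : ℕ) : Fin k → ℤ :=
  ptN k (al k b t) (be k b t)

def cellOf (k : ℕ) (b : Fin (k-1) → Bool) : Finset (Fin k → ℤ) :=
  univ.image fun t : Fin k => vert k b (t : ℕ)

lemma card_filter_lt (d t : ℕ) (h : t ≤ d) :
    (univ.filter fun s : Fin d => (s : ℕ) < t).card = t := by
  induction t with
  | zero => simp
  | succ t ih =>
    have hd : t < d := h
    have hins : (univ.filter fun s : Fin d => (s : ℕ) < t + 1)
        = insert ⟨t, hd⟩ (univ.filter fun s : Fin d => (s : ℕ) < t) := by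
      ext j
      simp only [mem_filter, mem_univ, true_and, mem_insert, Fin.ext_iff]
      omega
    rw [hins, Finset.card_insert_of_notMem (by simp), ih (by omega)]

lemma tot_le (b : Fin (k-1) → Bool) : tot k b ≤ k - 1 := by
  simpa [tot] using Finset.card_filter_le (univ : Finset (Fin (k-1))) _

lemma nT_le (b : Fin (k-1) → Bool) (t : ℕ) : nT k b t ≤ tot k b := by
  apply Finset.card_le_card
  intro s hs
  simp only [mem_filter, mem_univ, true_and] at hs ⊢
  exact hs.2

lemma nF_le (b : Fin (k-1) → Bool) (t : ℕ) : nF k b t ≤ (k - 1) - tot k b := by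
  have h1 : (univ.filter fun s : Fin (k-1) => b s = true).card
      + (univ.filter fun s : Fin (k-1) => ¬ (b s = true)).card = k - 1 := by
    rw [Finset.card_filter_add_card_filter_not]; simp
  have h2 : nF k b t ≤ (univ.filter fun s : Fin (k-1) => ¬ (b s = true)).card := by
    apply Finset.card_le_card
    intro s hs
    simp only [mem_filter, mem_univ, true_and] at hs ⊢
    simp [hs.2]
  have := tot_le (k := k) b
  unfold tot at *
  omega

lemma nF_mono (b : Fin (k-1) → Bool) {t t' : ℕ} (h : t ≤ t') : nF k b t ≤ nF k b t' := by
  apply Finset.card_le_card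
  intro s hs
  simp only [mem_filter, mem_univ, true_and] at hs ⊢
  exact ⟨lt_of_lt_of_le hs.1 h, hs.2⟩

lemma nT_mono (b : Fin (k-1) → Bool) {t t' : ℕ} (h : t ≤ t') : nT k b t ≤ nT k b t' := by
  apply Finset.card_le_card
  intro s hs
  simp only [mem_filter, mem_univ, true_and] at hs ⊢
  exact ⟨lt_of_lt_of_le hs.1 h, hs.2⟩

lemma nFT_sum (b : Fin (k-1) → Bool) {t : ℕ} (h : t ≤ k - 1) :
    nF k b t + nT k b t = t := by
  have h1 : ((univ.filter fun s : Fin (k-1) => (s:ℕ) < t).filter fun s => b s = true).card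
      + ((univ.filter fun s : Fin (k-1) => (s:ℕ) < t).filter fun s => ¬ (b s = true)).card
      = (univ.filter fun s : Fin (k-1) => (s:ℕ) < t).card := by
    rw [Finset.card_filter_add_card_filter_not]
  rw [Finset.filter_filter, Finset.filter_filter, card_filter_lt _ _ h] at h1
  have e1 : nT k b t = (univ.filter fun s : Fin (k-1) => (s:ℕ) < t ∧ b s = true).card := rfl
  have e2 : nF k b t = (univ.filter fun s : Fin (k-1) => (s:ℕ) < t ∧ ¬ (b s = true)).card := by
    unfold nF
    congr 1
    apply Finset.filter_congr
    intro s _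
    simp
  omega

lemma al_le_be (b : Fin (k-1) → Bool) (t t' : ℕ) : al k b t ≤ be k b t' :=
  le_trans (nF_le b t) (Nat.le_add_right _ _)

lemma be_le (b : Fin (k-1) → Bool) (t : ℕ) : be k b t ≤ k - 1 := by
  have h1 := nT_le (k := k) b t
  have h2 := tot_le (k := k) b
  unfold be
  omega

lemma al_lt (hk : 1 ≤ k) (b : Fin (k-1) → Bool) (t : ℕ) : al k b t < k :=
  lt_of_le_of_lt (le_trans (al_le_be b t t) (be_le b t)) (by omega)

lemma be_lt (hk : 1 ≤ k) (b : Fin (k-1) → Bool) (t : ℕ) : be k b t < k :=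
  lt_of_le_of_lt (be_le b t) (by omega)

lemma al_zero (b : Fin (k-1) → Bool) : al k b 0 = 0 := by
  simp [al, nF]

lemma be_zero (b : Fin (k-1) → Bool) : be k b 0 = k - 1 - tot k b := by
  simp [be, nT]

lemma nF_step (b : Fin (k-1) → Bool) (s : Fin (k-1)) :
    nF k b ((s : ℕ) + 1) = nF k b (s : ℕ) + (if b s = false then 1 else 0) := by
  by_cases hb : b s = false
  · have hins : (univ.filter fun j : Fin (k-1) => (j : ℕ) < (s:ℕ) + 1 ∧ b j = false)
        = insert s (univ.filter fun j : Fin (k-1) => (j : ℕ) < (s:ℕ) ∧ b j = false) := by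
      ext j
      simp only [mem_filter, mem_univ, true_and, mem_insert]
      constructor
      · rintro ⟨h1, h2⟩
        rcases Nat.lt_succ_iff_lt_or_eq.mp h1 with h | h
        · right; exact ⟨h, h2⟩
        · left; exact Fin.ext h
      · rintro (h | ⟨h1, h2⟩)
        · subst h; exact ⟨by omega, hb⟩
        · exact ⟨by omega, h2⟩
    rw [nF, hins, Finset.card_insert_of_notMem (by simp), hb]
    rfl
  · have heq : (univ.filter fun j : Fin (k-1) => (j : ℕ) < (s:ℕ) + 1 ∧ b j = false)
        = (univ.filter fun j : Fin (k-1) => (j : ℕ) < (s:ℕ) ∧ b j = false) := by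
      ext j
      simp only [mem_filter, mem_univ, true_and]
      constructor
      · rintro ⟨h1, h2⟩
        refine ⟨?_, h2⟩
        rcases Nat.lt_succ_iff_lt_or_eq.mp h1 with h | h
        · exact h
        · exact absurd h2 (by rw [Fin.ext h]; simp at hb ⊢; exact hb)
      · rintro ⟨h1, h2⟩; exact ⟨by omega, h2⟩
    rw [nF, heq, if_neg hb]
    rfl

lemma sum_ind_filter (k n a : ℕ) (ha : a < k) :
    (∑ i ∈ univ.filter (fun i : Fin k => (i : ℕ) < n), (if (i : ℕ) = a then (1:ℤ) else 0))
      = if a < n then 1 else 0 := by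
  have hcongr : ∀ i : Fin k, (if (i : ℕ) = a then (1:ℤ) else 0)
      = (if i = ⟨a, ha⟩ then (1:ℤ) else 0) := by
    intro i
    simp [Fin.ext_iff]
  rw [Finset.sum_congr rfl (fun i _ => hcongr i)]
  rw [Finset.sum_ite_eq' _ (⟨a, ha⟩ : Fin k) (fun _ => (1:ℤ))]
  simp

lemma sum_ind (k a : ℕ) (ha : a < k) :
    (∑ i : Fin k, (if (i : ℕ) = a then (1:ℤ) else 0)) = 1 := by
  have h := sum_ind_filter k k a ha
  have hfil : (univ.filter (fun i : Fin k => (i : ℕ) < k)) = univ := by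
    apply Finset.filter_true_of_mem
    intro i _
    exact i.isLt
  rw [hfil, if_pos ha] at h
  exact h

lemma sum_step (f : Fin k → ℤ) (i : Fin k) :
    (∑ j ∈ univ.filter (fun j : Fin k => (j : ℕ) < (i : ℕ) + 1), f j)
      = (∑ j ∈ univ.filter (fun j : Fin k => (j : ℕ) < (i : ℕ)), f j) + f i := by
  have hins : (univ.filter fun j : Fin k => (j : ℕ) < (i : ℕ) + 1)
      = insert i (univ.filter fun j : Fin k => (j : ℕ) < (i : ℕ)) := by
    ext j
    simp only [mem_filter, mem_univ, true_and, mem_insert, Fin.ext_iff]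
    omega
  rw [hins, Finset.sum_insert (by simp), add_comm]

lemma count_eq (D : Fin k → ℤ) (hD : ∀ i, D i = -1 ∨ D i = 0 ∨ D i = 1)
    (hsum : ∑ i, D i = 0) :
    (univ.filter fun i => D i = 1).card = (univ.filter fun i => D i = -1).card := by
  have h1 : ∀ i ∈ (univ : Finset (Fin k)),
      D i = (if D i = 1 then (1:ℤ) else 0) - (if D i = -1 then (1:ℤ) else 0) := by
    intro i _
    rcases hD i with h | h | h <;> rw [h] <;> norm_num
  rw [Finset.sum_congr rfl h1, Finset.sum_sub_distrib, Finset.sum_boole, Finset.sum_boole] at hsum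
  have h2 := sub_eq_zero.mp hsum
  exact_mod_cast h2

lemma adjG_symm {q : ℕ} {v w : Fin k → ℤ} (h : AdjG k q v w) : AdjG k q w v := by
  obtain ⟨hne, hv, hw, hent, hcard, halt⟩ := h
  refine ⟨hne.symm, hw, hv, ?_, ?_, ?_⟩
  · intro i
    rcases hent i with h | h | h
    · right; right; omega
    · right; left; omega
    · left; omega
  · have e1 : ∀ i : Fin k, (w i - v i = 1) ↔ (v i - w i = -1) := fun i => by omega
    have e2 : ∀ i : Fin k, (w i - v i = -1) ↔ (v i - w i = 1) := fun i => by omega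
    rw [Finset.filter_congr (fun i _ => e1 i), Finset.filter_congr (fun i _ => e2 i), hcard]
  · intro i j hij hi hj hz
    have hi' : w i - v i ≠ 0 := hi
    have hj' : w j - v j ≠ 0 := hj
    have hi2 : v i - w i ≠ 0 := by intro hh; exact hi' (by omega)
    have hj2 : v j - w j ≠ 0 := by intro hh; exact hj' (by omega)
    have hz' : ∀ l : Fin k, i < l → l < j → v l - w l = 0 := by
      intro l h1 h2
      have hl : w l - v l = 0 := hz l h1 h2
      omega
    have hmain : v i - w i = -(v j - w j) := halt i j hij hi2 hj2 hz'
    show w i - v i = -(w j - v j)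
    omega

/-- Key lemma: partial sums in {0,1} give adjacency. -/
lemma adj_of_partial {q : ℕ} (v w : Fin k → ℤ)
    (hv : inSimplex k q v) (hw : inSimplex k q w) (hne : v ≠ w)
    (hH : ∀ n : ℕ,
      (∑ i ∈ univ.filter (fun i : Fin k => (i : ℕ) < n), (v i - w i)) = 0 ∨
      (∑ i ∈ univ.filter (fun i : Fin k => (i : ℕ) < n), (v i - w i)) = 1) :
    AdjG k q v w := by
  have hstep : ∀ i : Fin k,
      (∑ j ∈ univ.filter (fun j : Fin k => (j : ℕ) < (i : ℕ) + 1), (v j - w j))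
      = (∑ j ∈ univ.filter (fun j : Fin k => (j : ℕ) < (i : ℕ)), (v j - w j)) + (v i - w i) :=
    fun i => sum_step (fun j => v j - w j) i
  have hent : ∀ i : Fin k, v i - w i = -1 ∨ v i - w i = 0 ∨ v i - w i = 1 := by
    intro i
    have h1 := hH (i : ℕ)
    have h2 := hH ((i : ℕ) + 1)
    have h3 := hstep i
    omega
  have hsum : ∑ i, (v i - w i) = 0 := by
    rw [Finset.sum_sub_distrib, hv.2, hw.2]
    ring
  refine ⟨hne, hv, hw, hent, count_eq (fun i => v i - w i) hent hsum, ?_⟩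
  intro i j hij hi hj hz
  have hi2 : v i - w i ≠ 0 := hi
  have hj2 : v j - w j ≠ 0 := hj
  have hflat : ∀ m : ℕ, (i : ℕ) + 1 ≤ m → m ≤ (j : ℕ) →
      (∑ l ∈ univ.filter (fun l : Fin k => (l : ℕ) < m), (v l - w l))
      = (∑ l ∈ univ.filter (fun l : Fin k => (l : ℕ) < (i : ℕ) + 1), (v l - w l)) := by
    intro m hm
    induction m, hm using Nat.le_induction with
    | base => intro _; rfl
    | succ n hn ih =>
      intro hle
      have hnk : n < k := lt_of_lt_of_le (by omega : n < (j:ℕ)) (le_of_lt j.isLt)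
      have hl1 : i < (⟨n, hnk⟩ : Fin k) := by
        rw [Fin.lt_def]; simp; omega
      have hl2 : (⟨n, hnk⟩ : Fin k) < j := by
        rw [Fin.lt_def]; simp; omega
      have h0 : v (⟨n, hnk⟩ : Fin k) - w (⟨n, hnk⟩ : Fin k) = 0 := hz ⟨n, hnk⟩ hl1 hl2
      have hs : (∑ l ∈ univ.filter (fun l : Fin k => (l : ℕ) < n + 1), (v l - w l))
          = (∑ l ∈ univ.filter (fun l : Fin k => (l : ℕ) < n), (v l - w l))
            + (v (⟨n, hnk⟩ : Fin k) - w (⟨n, hnk⟩ : Fin k)) := by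
        have := sum_step (fun l => v l - w l) (⟨n, hnk⟩ : Fin k)
        simpa using this
      rw [hs, h0, add_zero]
      exact ih (by omega)
  have hij' : (i : ℕ) + 1 ≤ (j : ℕ) := hij
  have hkey := hflat (j : ℕ) hij' le_rfl
  have h1 := hH (i : ℕ)
  have h2 := hH ((i : ℕ) + 1)
  have h3 := hH ((j : ℕ) + 1)
  have h4 := hstep i
  have h5 := hstep j
  show v i - w i = -(v j - w j)
  omega

end Aux

section CellFamily

open Finset

variable {k : ℕ}

lemma inSimplex_ptN (hk : 1 ≤ k) {a b : ℕ} (ha : a < k) (hb : b < k) :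
    inSimplex k 2 (ptN k a b) := by
  constructor
  · intro i
    unfold ptN
    split_ifs <;> norm_num
  · unfold ptN
    rw [Finset.sum_add_distrib, sum_ind k a ha, sum_ind k b hb]
    norm_num

lemma inSimplex_vert (hk : 1 ≤ k) (b : Fin (k-1) → Bool) (t : ℕ) :
    inSimplex k 2 (vert k b t) :=
  inSimplex_ptN hk (al_lt hk b t) (be_lt hk b t)

lemma H_vert (hk : 1 ≤ k) (b : Fin (k-1) → Bool) (t t' : ℕ) (n : ℕ) :
    (∑ i ∈ univ.filter (fun i : Fin k => (i : ℕ) < n), (vert k b t i - vert k b t' i))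
    = ((if al k b t < n then (1:ℤ) else 0) - (if al k b t' < n then 1 else 0))
      + ((if be k b t < n then (1:ℤ) else 0) - (if be k b t' < n then 1 else 0)) := by
  unfold vert ptN
  rw [Finset.sum_sub_distrib, Finset.sum_add_distrib, Finset.sum_add_distrib,
    sum_ind_filter k n _ (al_lt hk b t), sum_ind_filter k n _ (be_lt hk b t),
    sum_ind_filter k n _ (al_lt hk b t'), sum_ind_filter k n _ (be_lt hk b t')]
  ring

lemma vert_ne (hk : 1 ≤ k) (b : Fin (k-1) → Bool) {t t' : ℕ}
    (htt : t < t') (ht' : t' ≤ k - 1) : vert k b t ≠ vert k b t' := by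
  intro heq
  have hmF : nF k b t ≤ nF k b t' := nF_mono b (le_of_lt htt)
  have hmT : nT k b t ≤ nT k b t' := nT_mono b (le_of_lt htt)
  have hs1 := nFT_sum b (le_trans (le_of_lt htt) ht')
  have hs2 := nFT_sum b ht'
  have e1 : al k b t = nF k b t := rfl
  have e2 : al k b t' = nF k b t' := rfl
  have e3 : be k b t = (k - 1 - tot k b) + nT k b t := rfl
  have e4 : be k b t' = (k - 1 - tot k b) + nT k b t' := rfl
  have hch1 : al k b t ≤ al k b t' := by omega
  have hch2 : al k b t' ≤ be k b t := al_le_be b t' t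
  have hch3 : be k b t ≤ be k b t' := by omega
  have hcase : al k b t < al k b t' ∨ be k b t < be k b t' := by omega
  have hzero : ∀ n : ℕ,
      (∑ i ∈ univ.filter (fun i : Fin k => (i : ℕ) < n), (vert k b t i - vert k b t' i)) = 0 := by
    intro n
    rw [heq]
    simp
  rcases hcase with hc | hc
  · have h := hzero (al k b t + 1)
    rw [H_vert hk b t t'] at h
    split_ifs at h <;> omega
  · have h := hzero (be k b t + 1)
    rw [H_vert hk b t t'] at h
    split_ifs at h <;> omega

lemma adj_vert (hk : 1 ≤ k) (b : Fin (k-1) → Bool) {t t' : ℕ}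
    (htt : t < t') (ht' : t' ≤ k - 1) : AdjG k 2 (vert k b t) (vert k b t') := by
  apply adj_of_partial (vert k b t) (vert k b t')
    (inSimplex_vert hk b t) (inSimplex_vert hk b t') (vert_ne hk b htt ht')
  intro n
  rw [H_vert hk b t t']
  have hmF : nF k b t ≤ nF k b t' := nF_mono b (le_of_lt htt)
  have hmT : nT k b t ≤ nT k b t' := nT_mono b (le_of_lt htt)
  have e3 : be k b t = (k - 1 - tot k b) + nT k b t := rfl
  have e4 : be k b t' = (k - 1 - tot k b) + nT k b t' := rfl
  have hch1 : al k b t ≤ al k b t' := hmF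
  have hch2 : al k b t' ≤ be k b t := al_le_be b t' t
  have hch3 : be k b t ≤ be k b t' := by omega
  split_ifs <;> omega

lemma isCell_cellOf (hk : 2 ≤ k) (b : Fin (k-1) → Bool) : IsCell k 2 (cellOf k b) := by
  have hk1 : 1 ≤ k := by omega
  have hinj : Set.InjOn (fun t : Fin k => vert k b (t : ℕ)) (univ : Finset (Fin k)) := by
    intro t _ t' _ h
    by_contra hne
    rcases lt_trichotomy (t : ℕ) (t' : ℕ) with hlt | heq | hgt
    · exact vert_ne hk1 b hlt (by omega) h
    · exact hne (Fin.ext heq)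
    · exact vert_ne hk1 b hgt (by omega) h.symm
  refine ⟨?_, ?_, ?_⟩
  · rw [cellOf, Finset.card_image_of_injOn hinj]
    simp
  · intro v hv
    rw [cellOf, Finset.mem_image] at hv
    obtain ⟨t, _, ht⟩ := hv
    rw [← ht]
    exact inSimplex_vert hk1 b _
  · intro v hv w hw hne
    rw [cellOf, Finset.mem_image] at hv hw
    obtain ⟨t, _, ht⟩ := hv
    obtain ⟨t', _, ht'⟩ := hw
    rw [← ht, ← ht']
    rcases lt_trichotomy (t : ℕ) (t' : ℕ) with hlt | heq | hgt
    · exact adj_vert hk1 b hlt (by omega)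
    · exact absurd (ht' ▸ ht ▸ congrArg (fun s => vert k b s) heq) hne
    · exact adjG_symm (adj_vert hk1 b hgt (by omega))

lemma ptN_mem {a b : ℕ} (i : Fin k) (h : 0 < ptN k a b i) : (i:ℕ) = a ∨ (i:ℕ) = b := by
  unfold ptN at h
  split_ifs at h with h1 h2
  · exact Or.inl h1
  · exact Or.inl h1
  · exact Or.inr ‹_›
  · omega

lemma ptN_pos_left {a b : ℕ} (ha : a < k) : 0 < ptN k a b ⟨a, ha⟩ := by
  unfold ptN
  simp only [Fin.val_mk]
  split_ifs <;> omega

lemma ptN_pos_right {a b : ℕ} (hb : b < k) : 0 < ptN k a b ⟨b, hb⟩ := by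
  unfold ptN
  simp only [Fin.val_mk]
  split_ifs <;> omega

lemma ptN_inj {a b c d : ℕ} (hab : a ≤ b) (hcd : c ≤ d) (hb : b < k) (hd : d < k)
    (h : ptN k a b = ptN k c d) : a = c ∧ b = d := by
  have ha : a < k := lt_of_le_of_lt hab hb
  have hc : c < k := lt_of_le_of_lt hcd hd
  have m1 := ptN_mem (⟨a, ha⟩ : Fin k) (h ▸ ptN_pos_left ha)
  have m2 := ptN_mem (⟨b, hb⟩ : Fin k) (h ▸ ptN_pos_right hb)
  have m3 := ptN_mem (⟨c, hc⟩ : Fin k) (h ▸ ptN_pos_left hc)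
  have m4 := ptN_mem (⟨d, hd⟩ : Fin k) (h ▸ ptN_pos_right hd)
  simp only [Fin.val_mk] at m1 m2 m3 m4
  omega

lemma cellOf_inj (hk : 2 ≤ k) : Function.Injective (cellOf k) := by
  have hk1 : 1 ≤ k := by omega
  intro b b' h
  -- first: totals are equal
  have key : ∀ (b1 b2 : Fin (k-1) → Bool), cellOf k b1 = cellOf k b2 →
      tot k b1 ≤ tot k b2 := by
    intro b1 b2 hc
    have h0 : vert k b1 0 ∈ cellOf k b2 := by
      rw [← hc, cellOf, Finset.mem_image]
      exact ⟨⟨0, by omega⟩, Finset.mem_univ _, rfl⟩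
    rw [cellOf, Finset.mem_image] at h0
    obtain ⟨t, _, ht⟩ := h0
    have hij := ptN_inj (al_le_be b2 _ _) (al_le_be b1 _ _)
      (be_lt hk1 b2 _) (be_lt hk1 b1 _) ht
    have hA : al k b2 (t:ℕ) = al k b1 0 := hij.1
    have hB : be k b2 (t:ℕ) = be k b1 0 := hij.2
    rw [al_zero] at hA
    rw [be_zero] at hB
    have hs := nFT_sum b2 (show (t:ℕ) ≤ k - 1 by omega)
    have e2 : al k b2 (t:ℕ) = nF k b2 (t:ℕ) := rfl
    have e4 : be k b2 (t:ℕ) = (k - 1 - tot k b2) + nT k b2 (t:ℕ) := rfl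
    have ht1 := tot_le (k := k) b1
    have ht2 := tot_le (k := k) b2
    omega
  have htot : tot k b = tot k b' := le_antisymm (key b b' h) (key b' b h.symm)
  -- second: al and be agree at all times t ≤ k-1
  have key2 : ∀ t : Fin k, al k b (t:ℕ) = al k b' (t:ℕ) ∧ be k b (t:ℕ) = be k b' (t:ℕ) := by
    intro t
    have h0 : vert k b (t:ℕ) ∈ cellOf k b' := by
      rw [← h, cellOf, Finset.mem_image]
      exact ⟨t, Finset.mem_univ _, rfl⟩
    rw [cellOf, Finset.mem_image] at h0
    obtain ⟨t', _, ht'⟩ := h0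
    have hij := ptN_inj (al_le_be b' _ _) (al_le_be b _ _)
      (be_lt hk1 b' _) (be_lt hk1 b _) ht'
    have hs1 := nFT_sum b (show (t:ℕ) ≤ k - 1 by omega)
    have hs2 := nFT_sum b' (show (t':ℕ) ≤ k - 1 by omega)
    have e1 : al k b (t:ℕ) = nF k b (t:ℕ) := rfl
    have e2 : al k b' (t':ℕ) = nF k b' (t':ℕ) := rfl
    have e3 : be k b (t:ℕ) = (k - 1 - tot k b) + nT k b (t:ℕ) := rfl
    have e4 : be k b' (t':ℕ) = (k - 1 - tot k b') + nT k b' (t':ℕ) := rfl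
    have ht1 := tot_le (k := k) b
    have ht2 := tot_le (k := k) b'
    have hA : al k b' (t':ℕ) = al k b (t:ℕ) := hij.1
    have hB : be k b' (t':ℕ) = be k b (t:ℕ) := hij.2
    -- conclude t' = t, then transfer
    have htt : (t':ℕ) = (t:ℕ) := by omega
    rw [htt] at hA hB
    exact ⟨hA.symm, hB.symm⟩
  funext s
  have hlt1 : (s:ℕ) < k := by omega
  have hlt2 : (s:ℕ) + 1 < k := by omega
  have k1 := (key2 ⟨(s:ℕ), hlt1⟩).1
  have k2 := (key2 ⟨(s:ℕ) + 1, hlt2⟩).1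
  simp only at k1 k2
  have st1 := nF_step b s
  have st2 := nF_step b' s
  have e1 : al k b (s:ℕ) = nF k b (s:ℕ) := rfl
  have e2 : al k b' (s:ℕ) = nF k b' (s:ℕ) := rfl
  have e3 : al k b ((s:ℕ)+1) = nF k b ((s:ℕ)+1) := rfl
  have e4 : al k b' ((s:ℕ)+1) = nF k b' ((s:ℕ)+1) := rfl
  cases hb : b s <;> cases hb' : b' s <;> rw [hb] at st1 <;> rw [hb'] at st2 <;>
    simp only [if_pos, if_neg, Bool.false_eq_true, Bool.true_eq_false, if_true, if_false] at st1 st2 <;>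
    omega

end CellFamily

section Mono

open Finset

variable {k : ℕ}

/-- The star finset `A_m = {e_m + e_j : j}`. -/
def starC (k : ℕ) (m : Fin k) : Finset (Fin k → ℤ) :=
  univ.image fun j : Fin k => ptN k (m : ℕ) (j : ℕ)

lemma card_starC (m : Fin k) : (starC k m).card = k := by
  rw [starC, Finset.card_image_of_injOn, Finset.card_univ, Fintype.card_fin]
  intro j _ j' _ heq
  have h1 := congrFun heq j
  have h2 := congrFun heq j'
  simp only [ptN] at h1 h2
  rw [Fin.ext_iff]
  split_ifs at h1 h2 <;> omega

lemma decomp (v : Fin k → ℤ) (hv : inSimplex k 2 v) (m : Fin k) (hm : v m ≠ 0) :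
    ∃ j : Fin k, v = ptN k (m : ℕ) (j : ℕ) := by
  obtain ⟨hpos, hsum⟩ := hv
  set w : Fin k → ℤ := fun l => v l - (if l = m then 1 else 0) with hw
  have hw0 : ∀ l, 0 ≤ w l := by
    intro l
    simp only [hw]
    split_ifs with hl
    · subst hl; have := hpos l; omega
    · have := hpos l; omega
  have hwsum : ∑ l, w l = 1 := by
    simp only [hw]
    rw [Finset.sum_sub_distrib, hsum]
    rw [Finset.sum_ite_eq' univ m (fun _ => (1:ℤ))]
    simp
  have hex : ∃ j, 1 ≤ w j := by
    by_contra hcon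
    push_neg at hcon
    have : ∀ l ∈ (univ : Finset (Fin k)), w l = 0 := by
      intro l _
      have := hw0 l
      have := hcon l
      omega
    rw [Finset.sum_congr rfl this] at hwsum
    simp at hwsum
  obtain ⟨j, hj⟩ := hex
  have hj1 : w j ≤ 1 := by
    calc w j ≤ ∑ l, w l := Finset.single_le_sum (fun l _ => hw0 l) (Finset.mem_univ j)
    _ = 1 := hwsum
  have hwj : w j = 1 := le_antisymm hj1 hj
  have hrest : ∀ l, l ≠ j → w l = 0 := by
    intro l hl
    have hsub : ({l, j} : Finset (Fin k)) ⊆ univ := Finset.subset_univ _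
    have hle : ∑ x ∈ ({l, j} : Finset (Fin k)), w x ≤ ∑ x, w x :=
      Finset.sum_le_sum_of_subset_of_nonneg hsub (fun x _ _ => hw0 x)
    rw [Finset.sum_pair hl, hwsum] at hle
    have := hw0 l
    omega
  refine ⟨j, ?_⟩
  funext l
  have hvl : v l = w l + (if l = m then 1 else 0) := by simp [hw]
  have hwl : w l = if l = j then 1 else 0 := by
    split_ifs with hl
    · subst hl; exact hwj
    · exact hrest l hl
  rw [hvl, hwl, ptN]
  have c1 : ((l:ℕ) = (m:ℕ)) ↔ (l = m) := by rw [Fin.ext_iff]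
  have c2 : ((l:ℕ) = (j:ℕ)) ↔ (l = j) := by rw [Fin.ext_iff]
  rw [if_congr c1 rfl rfl, if_congr c2 rfl rfl, add_comm]

lemma mono_cell_eq_star (hk : 1 ≤ k) (c : (Fin k → ℤ) → Fin k) (hc : IsSperner k 2 c)
    {S : Finset (Fin k → ℤ)} (hS : IsCell k 2 S) (hm : ¬ NonMono c S) :
    ∃ m : Fin k, S = starC k m ∧ ∀ v ∈ S, c v = m := by
  have hne : S.Nonempty := by
    rw [← Finset.card_pos, hS.1]
    omega
  obtain ⟨v0, hv0⟩ := hne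
  set m := c v0 with hmdef
  have hall : ∀ v ∈ S, c v = m := by
    intro v hv
    simp only [NonMono] at hm
    push_neg at hm
    exact hm v hv v0 hv0
  refine ⟨m, ?_, hall⟩
  have hsub : S ⊆ starC k m := by
    intro v hv
    have hvs := hS.2.1 v hv
    have hvm : v m ≠ 0 := by
      intro h0
      exact hc v hvs m h0 (hall v hv)
    obtain ⟨j, hj⟩ := decomp v hvs m hvm
    rw [starC, Finset.mem_image]
    exact ⟨j, Finset.mem_univ _, hj.symm⟩
  have := card_starC (k := k) m
  exact (Finset.eq_of_subset_of_card_le hsub (by rw [this, hS.1])).symm.symm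

lemma mono_unique (hk : 2 ≤ k) (c : (Fin k → ℤ) → Fin k) (hc : IsSperner k 2 c)
    {S T : Finset (Fin k → ℤ)} (hS : IsCell k 2 S) (hT : IsCell k 2 T)
    (hSm : ¬ NonMono c S) (hTm : ¬ NonMono c T) : S = T := by
  obtain ⟨m, hSeq, hScol⟩ := mono_cell_eq_star (by omega) c hc hS hSm
  obtain ⟨m', hTeq, hTcol⟩ := mono_cell_eq_star (by omega) c hc hT hTm
  have hmm : m = m' := by
    have h1 : ptN k (m : ℕ) (m' : ℕ) ∈ S := by
      rw [hSeq, starC, Finset.mem_image]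
      exact ⟨m', Finset.mem_univ _, rfl⟩
    have h2 : ptN k (m : ℕ) (m' : ℕ) ∈ T := by
      rw [hTeq, starC, Finset.mem_image]
      exact ⟨m, Finset.mem_univ _, (ptN_comm _ _).symm⟩
    exact (hScol _ h1).symm.trans (hTcol _ h2)
  rw [hSeq, hTeq, hmm]

end Mono

section Finiteness

open Finset

lemma simplex_finite (k : ℕ) : {v : Fin k → ℤ | inSimplex k 2 v}.Finite := by
  have hsub : {v : Fin k → ℤ | inSimplex k 2 v} ⊆
      Set.pi Set.univ (fun _ : Fin k => Set.Icc (0:ℤ) 2) := by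
    intro v hv
    intro i _
    obtain ⟨hpos, hsum⟩ := hv
    refine ⟨hpos i, ?_⟩
    calc v i ≤ ∑ j, v j := Finset.single_le_sum (fun j _ => hpos j) (Finset.mem_univ i)
    _ = 2 := by rw [hsum]; norm_num
  exact (Set.Finite.pi (fun _ => Set.finite_Icc 0 2)).subset hsub

lemma cells_finite (k : ℕ) (c : (Fin k → ℤ) → Fin k) :
    {S : Finset (Fin k → ℤ) | IsCell k 2 S ∧ NonMono c S}.Finite := by
  have hfin := simplex_finite k
  set P : Finset (Fin k → ℤ) := hfin.toFinset with hP
  have hsub : {S : Finset (Fin k → ℤ) | IsCell k 2 S ∧ NonMono c S} ⊆ ↑P.powerset := by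
    intro S hS
    simp only [Finset.coe_powerset, Set.mem_preimage, Set.mem_powerset_iff]
    intro v hv
    simp only [hP, Set.Finite.coe_toFinset]
    exact hS.1.2.1 v hv
  exact (P.powerset.finite_toSet).subset hsub

end Finiteness

/-- For `q = 2`, every Sperner labeling of `Δ_{k,2} ∩ ℤ^k` has at
least `2^(k-1) - 1` non-monochromatic cells. -/
theorem lower_bound_q2 (k : ℕ) (hk : 2 ≤ k)
    (c : (Fin k → ℤ) → Fin k) (hc : IsSperner k 2 c) :
    2 ^ (k - 1) - 1 ≤
      {S : Finset (Fin k → ℤ) | IsCell k 2 S ∧ NonMono c S}.ncard := by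
  classical
  have hk1 : 1 ≤ k := by omega
  set Cells := {S : Finset (Fin k → ℤ) | IsCell k 2 S ∧ NonMono c S} with hCells
  set F : Finset (Finset (Fin k → ℤ)) :=
    (univ : Finset (Fin (k-1) → Bool)).image (cellOf k) with hF
  have hFcell : ∀ S ∈ F, IsCell k 2 S := by
    intro S hS
    rw [hF, Finset.mem_image] at hS
    obtain ⟨b, _, hb⟩ := hS
    rw [← hb]
    exact isCell_cellOf hk b
  have hFcard : F.card = 2 ^ (k - 1) := by
    rw [hF, Finset.card_image_of_injective _ (cellOf_inj hk), Finset.card_univ]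
    simp [Fintype.card_fun]
  set G : Finset (Finset (Fin k → ℤ)) := F.filter (fun S => NonMono c S) with hG
  have hsplit := Finset.card_filter_add_card_filter_not
    (s := F) (p := fun S => NonMono c S)
  have hmono1 : (F.filter (fun S => ¬ NonMono c S)).card ≤ 1 := by
    rw [Finset.card_le_one]
    intro S hS T hT
    rw [Finset.mem_filter] at hS hT
    exact mono_unique hk c hc (hFcell S hS.1) (hFcell T hT.1) hS.2 hT.2
  have hGcard : 2 ^ (k - 1) - 1 ≤ G.card := by
    rw [hG]
    omega
  have hGsub : ↑G ⊆ Cells := by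
    intro S hS
    simp only [hG, Finset.coe_filter, Set.mem_setOf_eq] at hS
    exact ⟨hFcell S hS.1, hS.2⟩
  have hfin : Cells.Finite := cells_finite k c
  calc 2 ^ (k - 1) - 1 ≤ G.card := hGcard
  _ = (↑G : Set (Finset (Fin k → ℤ))).ncard := (Set.ncard_coe_finset G).symm
  _ ≤ Cells.ncard := Set.ncard_le_ncard hGsub hfin
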